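/- Let E be a Hermitian vector bundle over a compact Hausdorff space X, and let s₁, …, s_k be continuous sections of E. Then {s₁, …, s_k} is a generating set for the left Hilbert C(X)-module Γ(E) of continuous sections if and only if for every x ∈ X, the vectors s₁(x), …, s_k(x) span the fiber E_x. -/

import Mathlib

open Bundle Set Matrix

section Aux

variable {X : Type*} [TopologicalSpace X]
    {F : Type*} [NormedAddCommGroup F] [NormedSpace ℂ F]
    {E : X → Type*} [∀ x, AddCommGroup (E x)] [∀ x, Module ℂ (E x)]
    [∀ x, TopologicalSpace (E x)] [TopologicalSpace (TotalSpace F E)]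
    [FiberBundle F E] [VectorBundle ℂ F E]

lemma aux_cont_zero : Continuous (fun x => (TotalSpace.mk x (0 : E x) : TotalSpace F E)) := by
  rw [continuous_iff_continuousAt]
  intro x₁
  rw [FiberBundle.continuousAt_totalSpace]
  refine ⟨continuousAt_id, ?_⟩
  have hb : x₁ ∈ (trivializationAt F E x₁).baseSet := FiberBundle.mem_baseSet_trivializationAt F E x₁
  have h : ∀ᶠ x in nhds x₁,
      (0 : F) = ((trivializationAt F E x₁) (TotalSpace.mk x (0:E x))).2 := by
    filter_upwards [(trivializationAt F E x₁).open_baseSet.mem_nhds hb] with x hx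
    have := Trivialization.zeroSection ℂ (e := trivializationAt F E x₁) hx
    simpa [Bundle.zeroSection] using (congrArg Prod.snd this).symm
  exact ContinuousAt.congr continuousAt_const h

lemma aux_cont_smul {σ : ∀ x, E x} {c : X → ℂ} {U : Set X} (hU : IsOpen U)
    (hc : ContinuousOn c U)
    (hσ : ContinuousOn (fun x => (TotalSpace.mk x (σ x) : TotalSpace F E)) U) :
    ContinuousOn (fun x => (TotalSpace.mk x (c x • σ x) : TotalSpace F E)) U := by
  intro x₁ hx₁
  apply ContinuousAt.continuousWithinAt
  have hσ1 : ContinuousAt (fun x => (TotalSpace.mk x (σ x) : TotalSpace F E)) x₁ :=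
    hσ.continuousAt (hU.mem_nhds hx₁)
  have hc1 : ContinuousAt c x₁ := hc.continuousAt (hU.mem_nhds hx₁)
  rw [FiberBundle.continuousAt_totalSpace] at hσ1 ⊢
  refine ⟨continuousAt_id, ?_⟩
  have hb : x₁ ∈ (trivializationAt F E x₁).baseSet := FiberBundle.mem_baseSet_trivializationAt F E x₁
  have heq : ∀ᶠ x in nhds x₁,
      c x • ((trivializationAt F E x₁) (TotalSpace.mk x (σ x))).2
        = ((trivializationAt F E x₁) (TotalSpace.mk x (c x • σ x))).2 := by
    filter_upwards [(trivializationAt F E x₁).open_baseSet.mem_nhds hb] with x hx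
    exact (((trivializationAt F E x₁).linear ℂ hx).map_smul (c x) (σ x)).symm
  exact ContinuousAt.congr (hc1.smul hσ1.2) heq

lemma aux_extend [NormalSpace X] [T1Space X] (σ : ∀ x, E x) {U : Set X} (hU : IsOpen U)
    {x₀ : X} (hx₀ : x₀ ∈ U)
    (hσ : ContinuousOn (fun x => (TotalSpace.mk x (σ x) : TotalSpace F E)) U) :
    ∃ r : ∀ x, E x, Continuous (fun x => (TotalSpace.mk x (r x) : TotalSpace F E)) ∧
      ∀ᶠ x in nhds x₀, r x = σ x := by
  obtain ⟨W, hWo, hx₀W, hWU⟩ := normal_exists_closure_subset (isClosed_singleton (x := x₀)) hU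
    (by simpa using hx₀)
  obtain ⟨V, hVo, hx₀V, hVW⟩ := normal_exists_closure_subset (isClosed_singleton (x := x₀)) hWo
    (by simpa using hx₀W)
  have hdisj : Disjoint Wᶜ (closure V) := disjoint_left.mpr fun a ha hb => ha (hVW hb)
  obtain ⟨φ, hφ0, hφ1, -⟩ :=
    exists_continuous_zero_one_of_isClosed (isClosed_compl_iff.2 hWo) isClosed_closure hdisj
  refine ⟨fun x => ((φ x : ℂ)) • σ x, ?_, ?_⟩
  · rw [continuous_iff_continuousAt]
    intro x
    by_cases hx : x ∈ U
    · exact (aux_cont_smul hU ((Complex.continuous_ofReal.comp φ.continuous).continuousOn)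
        hσ).continuousAt (hU.mem_nhds hx)
    · have hxW : x ∈ (closure W)ᶜ := fun h => hx (hWU h)
      have h : ∀ᶠ y in nhds x,
          (TotalSpace.mk y (0 : E y) : TotalSpace F E)
            = (TotalSpace.mk y ((φ y : ℂ) • σ y) : TotalSpace F E) := by
        filter_upwards [isClosed_closure.isOpen_compl.mem_nhds hxW] with y hy
        have hy' : y ∈ Wᶜ := fun h => hy (subset_closure h)
        have : φ y = 0 := hφ0 hy'
        simp [this]
      exact ContinuousAt.congr (aux_cont_zero.continuousAt) h
  · filter_upwards [hVo.mem_nhds (by simpa using hx₀V)] with y hy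
    have : φ y = 1 := hφ1 (subset_closure hy)
    simp [this]

lemma aux_local {k : ℕ} {s : Fin k → (∀ x, E x)}
    (hs : ∀ j, Continuous (fun x => (TotalSpace.mk x (s j x) : TotalSpace F E)))
    {t : ∀ x, E x} (ht : Continuous (fun x => (TotalSpace.mk x (t x) : TotalSpace F E)))
    (x₀ : X) (hsp : Submodule.span ℂ (Set.range fun j => s j x₀) = ⊤) :
    ∃ N : Set X, IsOpen N ∧ x₀ ∈ N ∧ ∃ g : X → Fin k → ℂ,
      (∀ j, ContinuousOn (fun x => g x j) N) ∧ ∀ x ∈ N, t x = ∑ j, g x j • s j x := by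
  classical
  set e := trivializationAt F E x₀ with he
  have hx₀ : x₀ ∈ e.baseSet := FiberBundle.mem_baseSet_trivializationAt F E x₀
  set P : ∀ x, E x →ₗ[ℂ] F := fun x => e.linearMapAt ℂ x with hP
  -- the images of the sections at x₀ span F
  have hPtop : Submodule.span ℂ (Set.range fun j => P x₀ (s j x₀)) = ⊤ := by
    have h1 : (Set.range fun j => P x₀ (s j x₀)) = (P x₀) '' (Set.range fun j => s j x₀) := by
      rw [← Set.range_comp]; rfl
    have hsurj : Function.Surjective (P x₀) := fun w =>
      ⟨e.symmₗ ℂ x₀ w, e.linearMapAt_symmₗ hx₀ w⟩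
    rw [h1, ← Submodule.map_span, hsp, Submodule.map_top, LinearMap.range_eq_top.mpr hsurj]
  have hFfin : FiniteDimensional ℂ F :=
    Module.finite_def.mpr (Submodule.fg_def.mpr ⟨_, Set.finite_range _, hPtop⟩)
  obtain ⟨b, hbsub, hbspan, hbli⟩ := exists_linearIndependent ℂ (Set.range fun j => P x₀ (s j x₀))
  have hbfin : b.Finite := (Set.finite_range _).subset hbsub
  have : Fintype b := hbfin.fintype
  have hbtop : ⊤ ≤ Submodule.span ℂ (Set.range ((↑) : b → F)) := by
    rw [Subtype.range_coe, hbspan, hPtop]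
  let bb : Module.Basis b ℂ F := Module.Basis.mk hbli hbtop
  have hιex : ∀ m : b, ∃ j : Fin k, P x₀ (s j x₀) = (m : F) := fun m => hbsub m.2
  choose ι hι using hιex
  have hcoord : Continuous (bb.equivFun : F → b → ℂ) :=
    LinearMap.continuous_of_finiteDimensional (bb.equivFun : F ≃ₗ[ℂ] (b → ℂ)).toLinearMap
  -- trivialized sections are continuous on the base set
  have hPsec : ∀ (u : ∀ x, E x), Continuous (fun x => (TotalSpace.mk x (u x) : TotalSpace F E)) →
      ContinuousOn (fun x => P x (u x)) e.baseSet := by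
    intro u hu
    have h2 : ContinuousOn (fun x => e (TotalSpace.mk x (u x))) e.baseSet :=
      e.continuousOn.comp hu.continuousOn
        (fun x hx => by simpa [Trivialization.mem_source] using hx)
    have h1 : ContinuousOn (fun x => (e (TotalSpace.mk x (u x))).2) e.baseSet :=
      continuous_snd.comp_continuousOn h2
    refine h1.congr fun x hx => ?_
    show P x (u x) = _
    rw [hP]
    simp only [e.coe_linearMapAt_of_mem hx]
  set C : X → Matrix b b ℂ := fun x i m => bb.equivFun (P x (s (ι m) x)) i with hC
  have hCcont : ContinuousOn C e.baseSet := by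
    apply continuousOn_pi.2; intro i
    apply continuousOn_pi.2; intro m
    exact ((continuous_apply i).comp hcoord).comp_continuousOn (hPsec (s (ι m)) (hs (ι m)))
  have hC₀ : C x₀ = 1 := by
    ext i m
    have h1 : P x₀ (s (ι m) x₀) = bb m := by rw [hι m, Module.Basis.mk_apply]
    rw [hC]
    simp only [h1, Module.Basis.equivFun_self, Matrix.one_apply]
    exact if_congr eq_comm rfl rfl
  set N : Set X := e.baseSet ∩ (fun x => (C x).det) ⁻¹' {(0:ℂ)}ᶜ with hN
  have hNsub : N ⊆ e.baseSet := inter_subset_left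
  have hNo : IsOpen N := by
    refine ContinuousOn.isOpen_inter_preimage ?_ e.open_baseSet isOpen_compl_singleton
    exact (Continuous.matrix_det continuous_id).comp_continuousOn hCcont
  have hx₀N : x₀ ∈ N := by
    refine ⟨hx₀, ?_⟩
    simp [hC₀]
  set τ : X → b → ℂ := fun x => bb.equivFun (P x (t x)) with hτdef
  have hτ : ContinuousOn τ e.baseSet := hcoord.comp_continuousOn (hPsec t ht)
  set Dinv : X → Matrix b b ℂ := fun x => ((C x).det)⁻¹ • (C x).adjugate with hDinv
  set d : X → b → ℂ := fun x => Dinv x *ᵥ τ x with hd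
  set g : X → Fin k → ℂ := fun x j => ∑ m : b, if j = ι m then d x m else 0 with hg
  have hdcont : ContinuousOn d N := by
    rw [continuousOn_iff_continuous_restrict]
    have hCr : Continuous (fun y : N => C y) :=
      continuousOn_iff_continuous_restrict.mp (hCcont.mono hNsub)
    have hτr : Continuous (fun y : N => τ y) :=
      continuousOn_iff_continuous_restrict.mp (hτ.mono hNsub)
    have hdet : Continuous (fun y : N => ((C y).det)⁻¹) := by
      refine (hCr.matrix_det).inv₀ ?_
      exact fun y => by simpa using y.2.2
    exact Continuous.matrix_mulVec (hdet.smul hCr.matrix_adjugate) hτr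
  refine ⟨N, hNo, hx₀N, g, ?_, ?_⟩
  · intro j
    rw [hg]
    apply continuousOn_finset_sum
    intro m _
    by_cases h : j = ι m
    · simpa [h] using (continuousOn_pi.1 hdcont) m
    · simp only [h, if_false]
      exact continuousOn_const
  · intro x hx
    have hxB : x ∈ e.baseSet := hx.1
    have hxdet : (C x).det ≠ 0 := by simpa using hx.2
    have hCD : C x * Dinv x = 1 := by
      rw [hDinv]
      simp only [Matrix.mul_smul, Matrix.mul_adjugate, smul_smul,
        inv_mul_cancel₀ hxdet, one_smul]
    have hCd : C x *ᵥ d x = τ x := by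
      rw [hd, Matrix.mulVec_mulVec, hCD, Matrix.one_mulVec]
    have hsum : ∑ j, g x j • s j x = ∑ m : b, d x m • s (ι m) x := by
      rw [hg]
      simp only [Finset.sum_smul]
      rw [Finset.sum_comm]
      congr 1
      ext m
      simp [ite_smul]
    rw [hsum]
    -- injectivity of P x on the base set
    have hPinj : Function.Injective (P x) := by
      intro u v huv
      have h1 := congrArg (e.symmₗ ℂ x) huv
      rwa [hP, e.symmₗ_linearMapAt hxB, e.symmₗ_linearMapAt hxB] at h1
    apply hPinj
    apply bb.equivFun.injective
    show bb.equivFun (P x (t x)) = bb.equivFun (P x (∑ m : b, d x m • s (ι m) x))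
    have h3 : bb.equivFun ((P x) (t x)) = C x *ᵥ d x := hCd.symm
    rw [h3]
    funext i
    rw [map_sum, map_sum]
    simp only [_root_.map_smul, Finset.sum_apply, Pi.smul_apply, smul_eq_mul, Matrix.mulVec,
      dotProduct, hC]
    exact Finset.sum_congr rfl fun m _ => mul_comm _ _
end Aux

/-- For a Hermitian vector bundle `E` over a compact Hausdorff space `X`,
finitely many continuous sections `s₁, …, s_k` generate the Hilbert `C(X)`-module `Γ(E)`
of continuous sections if and only if the vectors `s₁(x), …, s_k(x)` span the fiber `E x`
for every `x ∈ X`. -/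
theorem sections_generate_iff_fiberwise_spanning
    {X : Type*} [TopologicalSpace X] [CompactSpace X] [T2Space X]
    {F : Type*} [NormedAddCommGroup F] [NormedSpace ℂ F]
    {E : X → Type*} [∀ x, AddCommGroup (E x)] [∀ x, Module ℂ (E x)]
    [∀ x, TopologicalSpace (E x)] [TopologicalSpace (TotalSpace F E)]
    [FiberBundle F E] [VectorBundle ℂ F E]
    -- a continuously varying Hermitian inner product on the fibers:
    (ip : ∀ x, E x → E x → ℂ)
    (hip_conj : ∀ x (u v : E x), (starRingEnd ℂ) (ip x u v) = ip x v u)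
    (hip_add : ∀ x (u v w : E x), ip x (u + v) w = ip x u w + ip x v w)
    (hip_smul : ∀ x (c : ℂ) (u v : E x), ip x (c • u) v = (starRingEnd ℂ) c * ip x u v)
    (hip_pos : ∀ x (v : E x), v ≠ 0 → 0 < (ip x v v).re)
    (hip_cont : ∀ s t : (∀ x, E x),
      Continuous (fun x => (TotalSpace.mk x (s x) : TotalSpace F E)) →
      Continuous (fun x => (TotalSpace.mk x (t x) : TotalSpace F E)) →
      Continuous fun x => ip x (s x) (t x))
    (k : ℕ) (s : Fin k → (∀ x, E x))
    (hs : ∀ j, Continuous (fun x => (TotalSpace.mk x (s j x) : TotalSpace F E))) :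
    (∀ t : ∀ x, E x, Continuous (fun x => (TotalSpace.mk x (t x) : TotalSpace F E)) →
        ∃ f : Fin k → C(X, ℂ), ∀ x, t x = ∑ j, f j x • s j x) ↔
      (∀ x, Submodule.span ℂ (Set.range fun j => s j x) = ⊤) := by
  constructor
  · -- generation implies fiberwise spanning
    intro hgen x₀
    rw [eq_top_iff]
    rintro v -
    set e := trivializationAt F E x₀ with he
    have hx₀ : x₀ ∈ e.baseSet := FiberBundle.mem_baseSet_trivializationAt F E x₀
    set w : F := (e (TotalSpace.mk x₀ v)).2 with hw
    set σ : ∀ x, E x := fun x => e.symm x w with hσdef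
    have hσ : ContinuousOn (fun x => (TotalSpace.mk x (σ x) : TotalSpace F E)) e.baseSet := by
      have h1 := e.continuousOn_symm
      exact h1.comp ((continuous_id.prodMk continuous_const).continuousOn)
        (fun x hx => ⟨hx, mem_univ _⟩)
    obtain ⟨r, hrc, hr⟩ := aux_extend σ e.open_baseSet hx₀ hσ
    obtain ⟨f, hf⟩ := hgen r hrc
    have hrx₀ : r x₀ = v := by
      have h1 : r x₀ = σ x₀ := hr.self_of_nhds
      rw [h1, hσdef]
      exact e.symm_apply_apply_mk hx₀ v
    rw [← hrx₀, hf x₀]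
    exact Submodule.sum_mem _ fun j _ =>
      Submodule.smul_mem _ _ (Submodule.subset_span ⟨j, rfl⟩)
  · -- fiberwise spanning implies generation
    intro hsp t ht
    choose N hNo hxN g hgc hgt using fun x₀ => aux_local hs ht x₀ (hsp x₀)
    obtain ⟨ρ, hρ⟩ := PartitionOfUnity.exists_isSubordinate (ι := X) isClosed_univ N hNo
      (fun x _ => Set.mem_iUnion.2 ⟨x, hxN x⟩)
    set f : Fin k → X → ℂ := fun j x => ∑ᶠ i, ρ i x • g i x j with hfdef
    have hfc : ∀ j, Continuous (f j) := fun j =>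
      hρ.continuous_finsum_smul hNo (fun i => hgc i j)
    refine ⟨fun j => ⟨f j, hfc j⟩, ?_⟩
    intro x
    have hfin : (Function.support fun i => ρ i x).Finite := ρ.locallyFinite.point_finite x
    have hmemN : ∀ i, ρ i x ≠ 0 → x ∈ N i := fun i hi =>
      hρ i (subset_tsupport _ (by exact hi))
    have hf_eq : ∀ j, f j x = ∑ i ∈ hfin.toFinset, ρ i x • g i x j := by
      intro j
      refine finsum_eq_sum_of_support_subset _ ?_
      intro i hi
      have : ρ i x ≠ 0 := fun h0 => by simp [h0] at hi
      simpa using this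
    have hone : ∑ i ∈ hfin.toFinset, ρ i x = 1 := by
      rw [← ρ.sum_eq_one (Set.mem_univ x)]
      exact (finsum_eq_sum_of_support_subset _ (by simp)).symm
    calc t x = ((1:ℝ):ℂ) • t x := by simp
      _ = ((∑ i ∈ hfin.toFinset, ρ i x : ℝ) : ℂ) • t x := by rw [hone]
      _ = ∑ i ∈ hfin.toFinset, ((ρ i x : ℝ):ℂ) • t x := by
            rw [Complex.ofReal_sum, Finset.sum_smul]
      _ = ∑ i ∈ hfin.toFinset, ((ρ i x : ℝ):ℂ) • ∑ j, g i x j • s j x := by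
            refine Finset.sum_congr rfl fun i hi => ?_
            rw [hgt i x (hmemN i (by simpa using hi))]
      _ = ∑ i ∈ hfin.toFinset, ∑ j, (ρ i x • g i x j) • s j x := by
            refine Finset.sum_congr rfl fun i hi => ?_
            rw [Finset.smul_sum]
            refine Finset.sum_congr rfl fun j _ => ?_
            rw [Complex.real_smul, smul_smul]
      _ = ∑ j, (∑ i ∈ hfin.toFinset, ρ i x • g i x j) • s j x := by
            rw [Finset.sum_comm]
            exact Finset.sum_congr rfl fun j _ => (Finset.sum_smul).symm
      _ = ∑ j, f j x • s j x := by
            refine Finset.sum_congr rfl fun j _ => ?_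
            rw [hf_eq j]
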